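/- Let v ∈ ℝⁿ with all components positive and sorted decreasingly, n > k ≥ 1, ‖v‖₁ ≤ C and v(1) ≤ C/k. Then v can be written as a convex combination of at most k+1 vectors, each having at most n−1 nonzero components, each with ℓ₁ norm equal to ‖v‖₁ and ℓ∞ norm at most C/k. -/

import Mathlib

open Finset

private def PMem (n : ℕ) (ck S : ℝ) (z : ℕ → ℝ) : Prop :=
  (∀ i < n, 0 ≤ z i ∧ z i ≤ ck) ∧ ∑ i ∈ Finset.range n, z i = S

private def VValid (n : ℕ) (ck S : ℝ) (w : ℕ → ℝ) : Prop :=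
  PMem n ck S w ∧ ∃ i₀, i₀ < n ∧ w i₀ = 0

private def Decomp (n : ℕ) (ck S : ℝ) (m : ℕ) (z : ℕ → ℝ) : Prop :=
  ∃ M, M ≤ m ∧ ∃ (w : Fin M → ℕ → ℝ) (x : Fin M → ℝ),
    (∀ t, 0 ≤ x t) ∧ (∑ t, x t) = 1 ∧ (∀ i < n, z i = ∑ t, x t * w t i) ∧
    ∀ t, VValid n ck S (w t)

private lemma decomp_mono {n : ℕ} {ck S : ℝ} {m m' : ℕ} (h : m ≤ m') {z : ℕ → ℝ}
    (hd : Decomp n ck S m z) : Decomp n ck S m' z := by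
  obtain ⟨M, hM, rest⟩ := hd; exact ⟨M, hM.trans h, rest⟩

private lemma valid_decomp {n : ℕ} {ck S : ℝ} {z : ℕ → ℝ} (h : VValid n ck S z) :
    Decomp n ck S 1 z := by
  refine ⟨1, le_refl 1, fun _ => z, fun _ => 1, fun _ => zero_le_one, by simp, ?_, fun _ => h⟩
  intro i _; simp

private lemma decomp_combine {n : ℕ} {ck S : ℝ} {m : ℕ} {z A B : ℕ → ℝ} {l : ℝ}
    (hA : VValid n ck S A) (hB : Decomp n ck S m B) (hl0 : 0 ≤ l) (hl1 : l ≤ 1)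
    (hz : ∀ i < n, z i = l * A i + (1 - l) * B i) :
    Decomp n ck S (m + 1) z := by
  obtain ⟨M, hM, w, x, hx0, hx1, hrep, hval⟩ := hB
  refine ⟨M + 1, by omega, Fin.cons A w, Fin.cons l (fun t => (1 - l) * x t), ?_, ?_, ?_, ?_⟩
  · intro t
    refine Fin.cases hl0 (fun t' => mul_nonneg (by linarith) (hx0 t')) t
  · rw [Fin.sum_cons, ← Finset.mul_sum, hx1]; ring
  · intro i hi
    rw [Fin.sum_univ_succ]
    simp only [Fin.cons_zero, Fin.cons_succ]
    rw [hz i hi, hrep i hi, Finset.mul_sum]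
    congr 1
    refine Finset.sum_congr rfl fun t _ => by ring
  · intro t; exact Fin.cases hA hval t

/-- Key inductive lemma: any point of the polytope `{0 ≤ z ≤ C/k, ∑ z = S}` with at
least `k - m` coordinates capped at `C/k` is a convex combination of at most `m+1`
points of the polytope, each having a zero coordinate. -/
private lemma key (n k : ℕ) (hk : 0 < k) (hkn : k < n) (C S : ℝ) (hC : 0 < C)
    (hS : S ≤ C) :
    ∀ m : ℕ, ∀ z : ℕ → ℝ, PMem n (C / k) S z →
      k ≤ ((Finset.range n).filter (fun i => z i = C / k)).card + m →
      Decomp n (C / k) S (m + 1) z := by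
  have hkR : (0:ℝ) < (k:ℝ) := by exact_mod_cast hk
  have hck : (0:ℝ) < C / k := div_pos hC hkR
  have hkC : (k:ℝ) * (C / k) = C := by field_simp
  -- helper: if all coordinates are capped, contradiction with n > k
  intro m
  induction m with
  | zero =>
    intro z hz hcard
    obtain ⟨hzb, hzs⟩ := hz
    -- find an uncapped zero coordinate
    set F := (Finset.range n).filter (fun i => z i = C / k) with hF
    have hFsub : F ⊆ Finset.range n := Finset.filter_subset _ _
    have hFsum : ∑ i ∈ F, z i = F.card * (C / k) := by
      rw [Finset.sum_congr rfl (fun i hi => (Finset.mem_filter.mp hi).2)]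
      simp [mul_comm]; exact Or.inl rfl
    have hsplit : ∑ i ∈ F, z i + ∑ i ∈ Finset.range n \ F, z i = S := by
      rw [← hzs, add_comm]; exact Finset.sum_sdiff hFsub
    have hcardk : (k:ℝ) ≤ (F.card : ℝ) := by exact_mod_cast Nat.le_of_lt_succ (by omega)
    have hCle : C ≤ ∑ i ∈ F, z i := by
      rw [hFsum]
      nlinarith [hkC, hck, hcardk]
    have hrest : ∑ i ∈ Finset.range n \ F, z i ≤ 0 := by linarith
    have hrestnn : ∀ i ∈ Finset.range n \ F, 0 ≤ z i := fun i hi =>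
      (hzb i (Finset.mem_range.mp (Finset.mem_sdiff.mp hi).1)).1
    have hrest0 : ∑ i ∈ Finset.range n \ F, z i = 0 :=
      le_antisymm hrest (Finset.sum_nonneg hrestnn)
    have hne : (Finset.range n \ F).Nonempty := by
      rw [Finset.sdiff_nonempty]
      intro hsub
      have : (Finset.range n).card ≤ F.card := Finset.card_le_card hsub
      have hnF : F = Finset.range n := Finset.Subset.antisymm hFsub hsub
      have : ∑ i ∈ Finset.range n, z i = n * (C / k) := by
        rw [← hnF, hFsum, hnF]; simp
      have hn : (n:ℝ) * (C / k) ≤ (k:ℝ) * (C / k) := by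
        rw [hkC, ← this, hzs]; exact hS
      have : (n:ℝ) ≤ (k:ℝ) := le_of_mul_le_mul_right (by linarith [hn]) hck
      have : n ≤ k := by exact_mod_cast this
      omega
    obtain ⟨i₀, hi₀⟩ := hne
    have hz0 : z i₀ = 0 := by
      have := (Finset.sum_eq_zero_iff_of_nonneg hrestnn).mp hrest0 i₀ hi₀
      exact this
    exact valid_decomp ⟨⟨hzb, hzs⟩, i₀, Finset.mem_range.mp (Finset.mem_sdiff.mp hi₀).1, hz0⟩
  | succ m ih =>
    intro z hz hcard
    obtain ⟨hzb, hzs⟩ := hz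
    by_cases hz0 : ∃ i, i < n ∧ z i = 0
    · obtain ⟨i₀, hi₀, h0⟩ := hz0
      exact decomp_mono (by omega) (valid_decomp ⟨⟨hzb, hzs⟩, i₀, hi₀, h0⟩)
    push_neg at hz0
    have hzpos : ∀ i < n, 0 < z i := fun i hi =>
      lt_of_le_of_ne (hzb i hi).1 (fun h => hz0 i hi h.symm)
    set ck := C / k with hckdef
    set F := (Finset.range n).filter (fun i => z i = ck) with hF
    -- there is an uncapped coordinate d
    have hUne : ∃ d, d < n ∧ z d < ck := by
      by_contra hall
      push_neg at hall
      have hcap : ∀ i < n, z i = ck := fun i hi => le_antisymm (hzb i hi).2 (hall i hi)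
      have : ∑ i ∈ Finset.range n, z i = n * ck := by
        rw [Finset.sum_congr rfl (fun i hi => hcap i (Finset.mem_range.mp hi))]
        simp [mul_comm]
      have hn : (n:ℝ) * ck ≤ (k:ℝ) * ck := by rw [hkC, ← this, hzs]; exact hS
      have : (n:ℝ) ≤ (k:ℝ) := le_of_mul_le_mul_right (by linarith [hn]) hck
      have : n ≤ k := by exact_mod_cast this
      omega
    obtain ⟨d, hdn, hdck⟩ := hUne
    set A := ((Finset.range n).filter (fun i => z i ≠ ck)).erase d with hA
    have hAsub : A ⊆ Finset.range n := (Finset.erase_subset _ _).trans (Finset.filter_subset _ _)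
    have hAmem : ∀ i ∈ A, i ≠ d ∧ i < n ∧ z i < ck := by
      intro i hi
      obtain ⟨hne, hi'⟩ := Finset.mem_erase.mp hi
      obtain ⟨hir, hiz⟩ := Finset.mem_filter.mp hi'
      exact ⟨hne, Finset.mem_range.mp hir, lt_of_le_of_ne (hzb i (Finset.mem_range.mp hir)).2 hiz⟩
    have hdA : d ∉ A := fun h => (hAmem d h).1 rfl
    set H := ∑ i ∈ A, (ck - z i) with hH
    -- H = (n-1) * ck - S + z d  ≥ z d
    have hinsub : insert d A ⊆ Finset.range n := by
      intro i hi
      rcases Finset.mem_insert.mp hi with h | h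
      · exact Finset.mem_range.mpr (h ▸ hdn)
      · exact hAsub h
    have hUeq : ∑ i ∈ insert d A, (ck - z i) = ∑ i ∈ Finset.range n, (ck - z i) := by
      refine Finset.sum_subset hinsub ?_
      intro i hir hni
      have hi : i < n := Finset.mem_range.mp hir
      have : z i = ck := by
        by_contra hne
        exact hni (Finset.mem_insert.mpr (Or.inr (Finset.mem_erase.mpr
          ⟨fun h => hni (Finset.mem_insert.mpr (Or.inl h)), Finset.mem_filter.mpr ⟨hir, hne⟩⟩)))
      rw [this]; ring
    have hrangesum : ∑ i ∈ Finset.range n, (ck - z i) = n * ck - S := by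
      rw [Finset.sum_sub_distrib, hzs]; simp [mul_comm]
    have hHeq : H = (n:ℝ) * ck - S - (ck - z d) := by
      have := hUeq
      rw [Finset.sum_insert hdA] at this
      rw [hrangesum] at this
      rw [hH]; linarith
    have hn1 : (k:ℝ) ≤ (n:ℝ) - 1 := by
      have : (k:ℝ) + 1 ≤ (n:ℝ) := by exact_mod_cast hkn
      linarith
    have hHge : z d ≤ H := by
      have : C ≤ ((n:ℝ) - 1) * ck := by
        rw [← hkC]
        exact mul_le_mul_of_nonneg_right hn1 (le_of_lt hck)
      rw [hHeq]; nlinarith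
    have hzd : 0 < z d := hzpos d hdn
    have hHpos : 0 < H := lt_of_lt_of_le hzd hHge
    have hAne : A.Nonempty := by
      by_contra hA0
      rw [Finset.not_nonempty_iff_eq_empty] at hA0
      rw [hH, hA0, Finset.sum_empty] at hHpos
      exact lt_irrefl 0 hHpos
    -- forward endpoint ZA
    set α := z d / H with hα
    have hα0 : 0 < α := div_pos hzd hHpos
    have hα1 : α ≤ 1 := (div_le_one hHpos).mpr hHge
    set ZA := fun i => if i = d then 0 else if i ∈ A then z i + α * (ck - z i) else z i with hZA
    have hZAd : ZA d = 0 := by simp [hZA]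
    have hZAA : ∀ i ∈ A, ZA i = z i + α * (ck - z i) := by
      intro i hi; simp only [hZA]
      rw [if_neg (hAmem i hi).1, if_pos hi]
    have hZAo : ∀ i, i ≠ d → i ∉ A → ZA i = z i := by
      intro i h1 h2; simp only [hZA]; rw [if_neg h1, if_neg h2]
    have hZAb : ∀ i < n, 0 ≤ ZA i ∧ ZA i ≤ ck := by
      intro i hi
      by_cases h1 : i = d
      · subst h1; rw [hZAd]; exact ⟨le_refl 0, le_of_lt hck⟩
      by_cases h2 : i ∈ A
      · rw [hZAA i h2]
        have hhi : 0 < ck - z i := by linarith [(hAmem i h2).2.2]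
        have h5 : 0 ≤ α * (ck - z i) := mul_nonneg (le_of_lt hα0) (le_of_lt hhi)
        have h6 : α * (ck - z i) ≤ 1 * (ck - z i) :=
          mul_le_mul_of_nonneg_right hα1 (le_of_lt hhi)
        exact ⟨by linarith [(hzb i hi).1], by linarith⟩
      · rw [hZAo i h1 h2]; exact hzb i hi
    have hZAsum : ∑ i ∈ Finset.range n, ZA i = S := by
      have hdiff : ∑ i ∈ Finset.range n, (ZA i - z i) = ∑ i ∈ insert d A, (ZA i - z i) := by
        refine (Finset.sum_subset hinsub ?_).symm
        intro i hir hni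
        rw [hZAo i (fun h => hni (Finset.mem_insert.mpr (Or.inl h)))
            (fun h => hni (Finset.mem_insert.mpr (Or.inr h)))]
        ring
      have h2 : ∑ i ∈ insert d A, (ZA i - z i) = -(z d) + α * H := by
        rw [Finset.sum_insert hdA, hZAd]
        have hA2 : ∑ i ∈ A, (ZA i - z i) = α * H := by
          rw [hH, Finset.mul_sum]
          exact Finset.sum_congr rfl fun i hi => by linarith [hZAA i hi]
        rw [hA2]; ring
      have h3 : α * H = z d := by rw [hα]; field_simp
      have h4 : ∑ i ∈ Finset.range n, (ZA i - z i) = 0 := by rw [hdiff, h2, h3]; ring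
      rw [Finset.sum_sub_distrib, hzs] at h4
      linarith
    have hZAvalid : VValid n ck S ZA := ⟨⟨hZAb, hZAsum⟩, d, hdn, hZAd⟩
    -- backward endpoint ZB
    obtain ⟨i₁, hi₁A, hi₁min⟩ := Finset.exists_min_image A (fun i => z i / (ck - z i)) hAne
    have hi₁ := hAmem i₁ hi₁A
    have hhi₁ : 0 < ck - z i₁ := by linarith [hi₁.2.2]
    set βcap := (ck - z d) / H with hβcap
    set β := min βcap (z i₁ / (ck - z i₁)) with hβ
    have hβcap0 : 0 < βcap := div_pos (by linarith) hHpos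
    have hβ0 : 0 < β := lt_min hβcap0 (div_pos (hzpos i₁ hi₁.2.1) hhi₁)
    have hβle : ∀ i ∈ A, β * (ck - z i) ≤ z i := by
      intro i hi
      have hhi : 0 < ck - z i := by linarith [(hAmem i hi).2.2]
      have h1 : β ≤ z i / (ck - z i) := le_trans (min_le_right _ _) (hi₁min i hi)
      calc β * (ck - z i) ≤ (z i / (ck - z i)) * (ck - z i) :=
            mul_le_mul_of_nonneg_right h1 (le_of_lt hhi)
        _ = z i := by field_simp
    have hβHle : β * H ≤ ck - z d := by
      calc β * H ≤ βcap * H := mul_le_mul_of_nonneg_right (min_le_left _ _) (le_of_lt hHpos)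
        _ = ck - z d := by rw [hβcap]; field_simp
    set ZB := fun i => if i = d then z d + β * H else if i ∈ A then z i - β * (ck - z i) else z i
      with hZB
    have hZBd : ZB d = z d + β * H := by simp [hZB]
    have hZBA : ∀ i ∈ A, ZB i = z i - β * (ck - z i) := by
      intro i hi; simp only [hZB]
      rw [if_neg (hAmem i hi).1, if_pos hi]
    have hZBo : ∀ i, i ≠ d → i ∉ A → ZB i = z i := by
      intro i h1 h2; simp only [hZB]; rw [if_neg h1, if_neg h2]
    have hZBb : ∀ i < n, 0 ≤ ZB i ∧ ZB i ≤ ck := by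
      intro i hi
      by_cases h1 : i = d
      · subst h1; rw [hZBd]
        have h5 : 0 ≤ β * H := mul_nonneg (le_of_lt hβ0) (le_of_lt hHpos)
        exact ⟨by linarith [(hzb i hi).1], by linarith [hβHle]⟩
      by_cases h2 : i ∈ A
      · rw [hZBA i h2]
        have hhi : 0 < ck - z i := by linarith [(hAmem i h2).2.2]
        have h5 : 0 ≤ β * (ck - z i) := mul_nonneg (le_of_lt hβ0) (le_of_lt hhi)
        exact ⟨by linarith [hβle i h2], by linarith [(hzb i hi).2]⟩
      · rw [hZBo i h1 h2]; exact hzb i hi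
    have hZBsum : ∑ i ∈ Finset.range n, ZB i = S := by
      have hdiff : ∑ i ∈ Finset.range n, (ZB i - z i) = ∑ i ∈ insert d A, (ZB i - z i) := by
        refine (Finset.sum_subset hinsub ?_).symm
        intro i hir hni
        rw [hZBo i (fun h => hni (Finset.mem_insert.mpr (Or.inl h)))
            (fun h => hni (Finset.mem_insert.mpr (Or.inr h)))]
        ring
      have h2 : ∑ i ∈ insert d A, (ZB i - z i) = 0 := by
        rw [Finset.sum_insert hdA, hZBd]
        have hA2 : ∑ i ∈ A, (ZB i - z i) = -(β * H) := by
          rw [hH, Finset.mul_sum, ← Finset.sum_neg_distrib]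
          exact Finset.sum_congr rfl fun i hi => by linarith [hZBA i hi]
        rw [hA2]; ring
      have h4 : ∑ i ∈ Finset.range n, (ZB i - z i) = 0 := by rw [hdiff, h2]
      rw [Finset.sum_sub_distrib, hzs] at h4
      linarith
    -- the convex combination  z = l • ZA + (1-l) • ZB
    set l := β / (α + β) with hl
    have hαβ : 0 < α + β := by linarith
    have hl0 : 0 ≤ l := le_of_lt (div_pos hβ0 hαβ)
    have hl1 : l ≤ 1 := by rw [hl, div_le_one hαβ]; linarith
    have h1l : 1 - l = α / (α + β) := by rw [hl]; field_simp; ring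
    have hαH : α * H = z d := by rw [hα]; field_simp
    have hcomb : ∀ i < n, z i = l * ZA i + (1 - l) * ZB i := by
      intro i hi
      by_cases hid : i = d
      · subst hid
        rw [hZAd, hZBd, h1l]
        have hkey2 : α * (z i + β * H) = (α + β) * z i := by
          calc α * (z i + β * H) = α * z i + β * (α * H) := by ring
            _ = α * z i + β * z i := by rw [hαH]
            _ = (α + β) * z i := by ring
        rw [mul_zero, zero_add, div_mul_eq_mul_div, eq_div_iff (ne_of_gt hαβ)]
        linarith [hkey2]
      by_cases hiA : i ∈ A
      · rw [hZAA i hiA, hZBA i hiA]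
        have he : l * α = (1 - l) * β := by
          rw [hl, h1l, div_mul_eq_mul_div, div_mul_eq_mul_div, mul_comm]
        linear_combination (z i - ck) * he
      · rw [hZAo i hid hiA, hZBo i hid hiA]; ring
    by_cases hcase : z i₁ / (ck - z i₁) ≤ βcap
    · -- the backward endpoint hits a zero: two valid vectors suffice
      have hβeq : β = z i₁ / (ck - z i₁) := min_eq_right hcase
      have hZB0 : ZB i₁ = 0 := by
        rw [hZBA i₁ hi₁A, hβeq]; field_simp; ring
      have hZBvalid : VValid n ck S ZB := ⟨⟨hZBb, hZBsum⟩, i₁, hi₁.2.1, hZB0⟩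
      exact decomp_combine hZAvalid (decomp_mono (by omega) (valid_decomp hZBvalid)) hl0 hl1 hcomb
    · -- the backward endpoint caps coordinate d: recurse
      push_neg at hcase
      have hβeq : β = βcap := min_eq_left (le_of_lt hcase)
      have hZBdc : ZB d = ck := by
        rw [hZBd, hβeq, hβcap]; field_simp; ring
      have hdF : d ∉ F := fun h => absurd (Finset.mem_filter.mp h).2 (ne_of_lt hdck)
      have hsub2 : insert d F ⊆ (Finset.range n).filter (fun i => ZB i = ck) := by
        intro i hi
        rcases Finset.mem_insert.mp hi with h | h
        · subst h; exact Finset.mem_filter.mpr ⟨Finset.mem_range.mpr hdn, hZBdc⟩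
        · obtain ⟨hir, hiz⟩ := Finset.mem_filter.mp h
          have hidne : i ≠ d := by
            intro he; rw [he] at hiz; exact absurd hiz (ne_of_lt hdck)
          have hiA : i ∉ A := by
            intro hiA'
            exact (Finset.mem_filter.mp (Finset.mem_of_mem_erase hiA')).2 hiz
          exact Finset.mem_filter.mpr ⟨hir, by rw [hZBo i hidne hiA]; exact hiz⟩
      have hcard2 : k ≤ ((Finset.range n).filter (fun i => ZB i = ck)).card + m := by
        have h1 := Finset.card_le_card hsub2
        rw [Finset.card_insert_of_notMem hdF] at h1
        omega
      exact decomp_combine hZAvalid (ih ZB ⟨hZBb, hZBsum⟩ hcard2) hl0 hl1 hcomb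

/-- Single inductive step: a sorted positive vector with `‖v‖₁ ≤ C` and
`v 0 ≤ C/k` is a convex combination of at most `k+1` vectors, each with at most
`n-1` nonzero components, ℓ₁ norm equal to `‖v‖₁`, and ℓ∞ norm at most `C/k`.
(Components are 0-indexed; coordinates beyond `n` are ignored.) -/
theorem inductive_step_decomposition
    (n k : ℕ) (hk : 0 < k) (hkn : k < n) (C : ℝ) (hC : 0 < C)
    (v : ℕ → ℝ)
    (hsort : ∀ i j, i ≤ j → j < n → v j ≤ v i)
    (hpos : ∀ i < n, 0 < v i)
    (hv1 : ∑ i ∈ Finset.range n, |v i| ≤ C)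
    (hmax : v 0 ≤ C / k) :
    ∃ M : ℕ, M ≤ k + 1 ∧
      ∃ (w : Fin M → ℕ → ℝ) (x : Fin M → ℝ),
        (∀ t, 0 ≤ x t) ∧ (∑ t, x t) = 1 ∧
        (∀ i < n, v i = ∑ t, x t * w t i) ∧
        ∀ t, (∃ s : Finset ℕ, s.card ≤ n - 1 ∧ ∀ i < n, i ∉ s → w t i = 0) ∧
          (∑ i ∈ Finset.range n, |w t i| = ∑ i ∈ Finset.range n, |v i|) ∧
          ∀ i < n, |w t i| ≤ C / k := by
  set S := ∑ i ∈ Finset.range n, |v i| with hSdef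
  have habs : ∀ i ∈ Finset.range n, |v i| = v i := fun i hi =>
    abs_of_pos (hpos i (Finset.mem_range.mp hi))
  have hvsum : ∑ i ∈ Finset.range n, v i = S := by
    rw [hSdef]; exact (Finset.sum_congr rfl habs).symm
  have hvb : ∀ i < n, 0 ≤ v i ∧ v i ≤ C / k := fun i hi =>
    ⟨le_of_lt (hpos i hi), le_trans (hsort 0 i (Nat.zero_le i) hi) hmax⟩
  have hkey := key n k hk hkn C S hC hv1 k v ⟨hvb, hvsum⟩ (by omega)
  obtain ⟨M, hM, w, x, hx0, hx1, hrep, hval⟩ := hkey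
  refine ⟨M, hM, w, x, hx0, hx1, hrep, ?_⟩
  intro t
  obtain ⟨⟨hwb, hwsum⟩, i₀, hi₀, hw0⟩ := hval t
  have hwabs : ∀ i ∈ Finset.range n, |w t i| = w t i := fun i hi =>
    abs_of_nonneg (hwb i (Finset.mem_range.mp hi)).1
  refine ⟨⟨(Finset.range n).erase i₀, ?_, ?_⟩, ?_, ?_⟩
  · exact le_of_eq (by rw [Finset.card_erase_of_mem (Finset.mem_range.mpr hi₀), Finset.card_range])
  · intro i hi hni
    have hii : i = i₀ := by
      by_contra hne
      exact hni (Finset.mem_erase.mpr ⟨hne, Finset.mem_range.mpr hi⟩)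
    rw [hii]; exact hw0
  · rw [Finset.sum_congr rfl hwabs, hwsum]
  · intro i hi; rw [abs_of_nonneg (hwb i hi).1]; exact (hwb i hi).2
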